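/- Let n ≥ 1, let V ∈ ℂ[z₁,…,zₙ] be a symmetric polynomial, and let t₁,…,tₙ ∈ ℂ be pairwise distinct. Then (1/n!) · Res_{z₁=∞} ⋯ Res_{zₙ=∞} [ V(z₁,…,zₙ) ∏_{i≠j}(zᵢ − zⱼ) / ∏_{i=1}^n ∏_{j=1}^n (tᵢ − zⱼ) ] = V(t₁,…,tₙ). -/

import Mathlib

open Filter

/-- The residue at infinity: minus the coefficient of `z⁻¹` in the Laurent expansion at
infinity, realized as minus the limit of `(2πi)⁻¹ ∮_{|z|=R} F` as `R → ∞`. -/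
noncomputable def resInf (F : ℂ → ℂ) : ℂ :=
  limUnder atTop (fun R : ℝ => -((2 * Real.pi * Complex.I)⁻¹ * ∮ z in C(0, R), F z))

/-- Iterated residue at infinity `Res_{z₁=∞} ⋯ Res_{z_m=∞} F`, taken first in the last
variable `z_m`, then `z_{m-1}`, and so on. -/
noncomputable def iterResInf : (m : ℕ) → ((Fin m → ℂ) → ℂ) → ℂ
  | 0, F => F (fun i => i.elim0)
  | m + 1, F => resInf (fun z => iterResInf m (fun w => F (Fin.cons z w)))

open Finset Polynomial

/-! ### Auxiliary algebraic lemmas -/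

private lemma neg_one_pow_mul_self (k : ℕ) : ((-1 : ℂ) ^ k) * ((-1 : ℂ) ^ k) = 1 := by
  rw [← pow_add, ← two_mul, pow_mul, neg_one_sq, one_pow]

private lemma neg_one_pow_ne_zero' (k : ℕ) : ((-1 : ℂ) ^ k) ≠ 0 :=
  pow_ne_zero _ (neg_ne_zero.mpr one_ne_zero)

private lemma div_neg_one_pow (x : ℂ) (k : ℕ) : x / (-1 : ℂ) ^ k = (-1 : ℂ) ^ k * x := by
  rw [div_eq_iff (neg_one_pow_ne_zero' k), mul_assoc, mul_comm x, ← mul_assoc,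
    neg_one_pow_mul_self, one_mul]

/-! ### Circle integral helpers -/

private lemma circleIntegrable_of_continuous {f : ℂ → ℂ} (hf : Continuous f) (c : ℂ) (R : ℝ) :
    CircleIntegrable f c R :=
  (hf.comp (continuous_circleMap c R)).intervalIntegrable _ _

private lemma circleIntegral_finset_sum {ι : Type*} (s : Finset ι) (f : ι → ℂ → ℂ) (c : ℂ)
    (R : ℝ) (h : ∀ i ∈ s, CircleIntegrable (f i) c R) :
    (∮ z in C(c, R), ∑ i ∈ s, f i z) = ∑ i ∈ s, ∮ z in C(c, R), f i z := by
  simp only [circleIntegral, Finset.smul_sum]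
  exact intervalIntegral.integral_finset_sum fun i hi => (h i hi).out

private lemma circleIntegral_add {f g : ℂ → ℂ} {c : ℂ} {R : ℝ}
    (hf : CircleIntegrable f c R) (hg : CircleIntegrable g c R) :
    (∮ z in C(c, R), (f z + g z)) = (∮ z in C(c, R), f z) + ∮ z in C(c, R), g z := by
  simp only [circleIntegral, smul_add]
  exact intervalIntegral.integral_add hf.out hg.out

private lemma circleIntegral_polynomial (p : Polynomial ℂ) (c : ℂ) (R : ℝ) :
    (∮ z in C(c, R), p.eval z) = 0 := by
  have h1 : (fun z : ℂ => p.eval z)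
      = fun z => ∑ k ∈ Finset.range (p.natDegree + 1), p.coeff k • ((z - 0) ^ (k : ℤ)) := by
    funext z
    rw [Polynomial.eval_eq_sum_range]
    exact Finset.sum_congr rfl fun k _ => by
      simp [smul_eq_mul, zpow_natCast]
  rw [h1, circleIntegral_finset_sum]
  · refine Finset.sum_eq_zero fun k _ => ?_
    rw [circleIntegral.integral_smul,
      circleIntegral.integral_sub_zpow_of_ne (by omega) c 0 R, smul_zero]
  · intro k _
    have : (fun z : ℂ => p.coeff k • ((z - 0) ^ (k : ℤ))) = fun z => p.coeff k * z ^ k := by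
      funext z; simp [smul_eq_mul, zpow_natCast]
    rw [this]
    exact circleIntegrable_of_continuous (continuous_const.mul (continuous_pow k)) _ _

/-! ### The one-variable residue computation -/

private lemma resInf_rational {nn : ℕ} (s : Fin nn → ℂ) (hs : Function.Injective s)
    (Q : Polynomial ℂ) :
    resInf (fun z => Q.eval z / ∏ i, (s i - z)) =
      ∑ i, Q.eval (s i) / ∏ k ∈ Finset.univ.erase i, (s k - s i) := by
  classical
  set d : Polynomial ℂ := Lagrange.nodal Finset.univ s with hd_def
  have hd : d.Monic := Lagrange.nodal_monic
  have hinj : Set.InjOn s ↑(Finset.univ : Finset (Fin nn)) := fun a _ b _ h => hs h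
  set r : Fin nn → ℂ := fun i => Q.eval (s i) with hr_def
  set wgt : Fin nn → ℂ := fun i => Lagrange.nodalWeight Finset.univ s i with hw_def
  have hmod : Q %ₘ d = Lagrange.interpolate Finset.univ s r := by
    refine Lagrange.eq_interpolate_of_eval_eq r hinj ?_ ?_
    · have h := Polynomial.degree_modByMonic_lt Q hd
      rwa [hd_def, Lagrange.degree_nodal] at h
    · intro i _
      have h2 := congrArg (Polynomial.eval (s i)) (Polynomial.modByMonic_add_div Q d)
      have h3 : Polynomial.eval (s i) d = 0 :=
        Lagrange.eval_nodal_at_node (Finset.mem_univ i)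
      simp only [Polynomial.eval_add, Polynomial.eval_mul, h3, zero_mul, add_zero] at h2
      exact h2
  have key : ∀ z : ℂ, (∀ i, z ≠ s i) →
      Q.eval z / ∏ i, (s i - z)
        = (-1 : ℂ) ^ nn *
          (Polynomial.eval z (Q /ₘ d) + ∑ i, wgt i * (z - s i)⁻¹ * r i) := by
    intro z hz
    have hprod : (∏ i, (s i - z)) = (-1 : ℂ) ^ nn * Polynomial.eval z d := by
      rw [hd_def, Lagrange.eval_nodal]
      calc (∏ i, (s i - z)) = ∏ i : Fin nn, (-1 : ℂ) * (z - s i) :=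
            Finset.prod_congr rfl fun i _ => by ring
        _ = (-1 : ℂ) ^ nn * ∏ i, (z - s i) := by
            rw [Finset.prod_mul_distrib, Finset.prod_const, Finset.card_univ, Fintype.card_fin]
    have hdz : Polynomial.eval z d ≠ 0 := by
      rw [hd_def, Lagrange.eval_nodal]
      exact Finset.prod_ne_zero_iff.mpr fun i _ => sub_ne_zero.mpr (hz i)
    have hQz : Q.eval z
        = Polynomial.eval z d *
            (Polynomial.eval z (Q /ₘ d) + ∑ i, wgt i * (z - s i)⁻¹ * r i) := by
      conv_lhs => rw [← Polynomial.modByMonic_add_div Q d]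
      rw [Polynomial.eval_add, Polynomial.eval_mul, hmod,
        Lagrange.eval_interpolate_not_at_node r (fun i _ => hz i)]
      ring
    rw [hQz, hprod, mul_comm ((-1 : ℂ) ^ nn) (Polynomial.eval z d), ← div_div,
      mul_div_cancel_left₀ _ hdz, div_neg_one_pow]
  set M : ℝ := 1 + ∑ i, ‖s i‖ with hM
  have habs : ∀ i, ‖s i‖ ≤ ∑ j, ‖s j‖ :=
    fun i => Finset.single_le_sum (f := fun j => ‖s j‖)
      (fun j _ => norm_nonneg _) (Finset.mem_univ i)
  have hsumnn : (0 : ℝ) ≤ ∑ j, ‖s j‖ :=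
    Finset.sum_nonneg fun j _ => norm_nonneg _
  have hMlt : ∀ R : ℝ, M ≤ R → ∀ i, ‖s i‖ < R := by
    intro R hR i
    have := habs i
    rw [hM] at hR
    linarith
  have hMpos : ∀ R : ℝ, M ≤ R → 0 < R := by
    intro R hR
    rw [hM] at hR
    linarith
  set A : ℂ := (-1 : ℂ) ^ nn * ((2 * Real.pi * Complex.I) * ∑ i, wgt i * r i) with hA
  have hconst : ∀ R : ℝ, M ≤ R →
      (∮ z in C(0, R), Q.eval z / ∏ i, (s i - z)) = A := by
    intro R hR
    have hR0 : 0 < R := hMpos R hR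
    have hzs : ∀ z ∈ Metric.sphere (0 : ℂ) R, ∀ i, z ≠ s i := by
      intro z hz i habs'
      have h1 : ‖z‖ = R := by
        simpa [Complex.dist_eq] using hz
      rw [habs'] at h1
      exact absurd h1 (ne_of_lt (hMlt R hR i))
    have hcong := circleIntegral.integral_congr (c := 0) (R := R) hR0.le
      (f := fun z => Q.eval z / ∏ i, (s i - z))
      (g := fun z => ((-1 : ℂ) ^ nn) •
        (Polynomial.eval z (Q /ₘ d) + ∑ i, wgt i * (z - s i)⁻¹ * r i))
      (fun z hz => by simpa [smul_eq_mul] using key z (hzs z hz))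
    rw [hcong, circleIntegral.integral_smul]
    have hint1 : CircleIntegrable (fun z => Polynomial.eval z (Q /ₘ d)) 0 R :=
      circleIntegrable_of_continuous (Q /ₘ d).continuous_aeval 0 R
    have hcont2 : ∀ i : Fin nn,
        ContinuousOn (fun z : ℂ => wgt i * (z - s i)⁻¹ * r i) (Metric.sphere (0 : ℂ) R) := by
      intro i
      refine (continuousOn_const.mul ?_).mul continuousOn_const
      refine ContinuousOn.inv₀ ((continuous_id.sub continuous_const).continuousOn) ?_
      intro z hz
      exact sub_ne_zero.mpr (hzs z hz i)
    have hint2 : ∀ i : Fin nn,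
        CircleIntegrable (fun z : ℂ => wgt i * (z - s i)⁻¹ * r i) 0 R :=
      fun i => (hcont2 i).circleIntegrable hR0.le
    have hintsum : CircleIntegrable
        (fun z : ℂ => ∑ i, wgt i * (z - s i)⁻¹ * r i) 0 R := by
      refine ContinuousOn.circleIntegrable hR0.le ?_
      exact continuousOn_finset_sum _ fun i _ => hcont2 i
    rw [circleIntegral_add hint1 hintsum, circleIntegral_polynomial, zero_add,
      circleIntegral_finset_sum _ _ _ _ fun i _ => hint2 i]
    have hper : ∀ i : Fin nn,
        (∮ z in C(0, R), wgt i * (z - s i)⁻¹ * r i)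
          = (wgt i * r i) * (2 * Real.pi * Complex.I) := by
      intro i
      have heq : (fun z : ℂ => wgt i * (z - s i)⁻¹ * r i)
          = fun z => (wgt i * r i) • (z - s i)⁻¹ := by
        funext z; simp only [smul_eq_mul]; ring
      rw [heq, circleIntegral.integral_smul,
        circleIntegral.integral_sub_inv_of_mem_ball
          (by simpa [Complex.dist_eq] using hMlt R hR i),
        smul_eq_mul]
    rw [Finset.sum_congr rfl fun i _ => hper i, ← Finset.sum_mul, hA, smul_eq_mul]
    ring
  have htend : Filter.Tendsto
      (fun R : ℝ => -((2 * Real.pi * Complex.I)⁻¹ *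
        ∮ z in C(0, R), (fun z => Q.eval z / ∏ i, (s i - z)) z))
      Filter.atTop (nhds (-((2 * Real.pi * Complex.I)⁻¹ * A))) := by
    refine Filter.Tendsto.congr' ?_ tendsto_const_nhds
    filter_upwards [Filter.eventually_ge_atTop M] with R hR
    rw [hconst R hR]
  have hres : resInf (fun z => Q.eval z / ∏ i, (s i - z))
      = -((2 * Real.pi * Complex.I)⁻¹ * A) := by
    rw [resInf]
    exact htend.limUnder_eq
  rw [hres, hA]
  have h2pi : (2 * Real.pi * Complex.I : ℂ) ≠ 0 := Complex.two_pi_I_ne_zero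
  have hsimp : -((2 * Real.pi * Complex.I)⁻¹ *
      ((-1 : ℂ) ^ nn * ((2 * Real.pi * Complex.I) * ∑ i, wgt i * r i)))
      = ∑ i, (-1 : ℂ) ^ (nn + 1) * (wgt i * r i) := by
    rw [← Finset.mul_sum, pow_succ]
    field_simp
  rw [hsimp]
  refine Finset.sum_congr rfl fun i _ => ?_
  have hcard : (Finset.univ.erase i).card = nn - 1 := by
    rw [Finset.card_erase_of_mem (Finset.mem_univ i), Finset.card_univ, Fintype.card_fin]
  have hPne : (∏ k ∈ Finset.univ.erase i, (s i - s k)) ≠ 0 := by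
    refine Finset.prod_ne_zero_iff.mpr fun k hk => ?_
    exact sub_ne_zero.mpr fun h => (Finset.mem_erase.mp hk).1 (hs h.symm)
  have hprod : (∏ k ∈ Finset.univ.erase i, (s k - s i))
      = (-1 : ℂ) ^ (nn - 1) * ∏ k ∈ Finset.univ.erase i, (s i - s k) := by
    calc (∏ k ∈ Finset.univ.erase i, (s k - s i))
        = ∏ k ∈ Finset.univ.erase i, (-1 : ℂ) * (s i - s k) :=
          Finset.prod_congr rfl fun k _ => by ring
      _ = (-1 : ℂ) ^ (nn - 1) * ∏ k ∈ Finset.univ.erase i, (s i - s k) := by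
          rw [Finset.prod_mul_distrib, Finset.prod_const, hcard]
  have hw : wgt i = (∏ k ∈ Finset.univ.erase i, (s i - s k))⁻¹ := by
    rw [hw_def]
    simp only [Lagrange.nodalWeight]
    exact Finset.prod_inv_distrib _
  have hpos : 0 < nn := i.pos
  have hnn1 : nn + 1 = (nn - 1) + 2 := by omega
  rw [hprod, hw, hr_def, hnn1, pow_add, neg_one_sq, mul_one, mul_comm ((-1:ℂ)^(nn-1)),
    ← div_div, div_neg_one_pow]
  ring

/-! ### Evaluation along `Fin.cons` -/

private lemma evalCons {m : ℕ} (P : MvPolynomial (Fin (m + 1)) ℂ) (a : ℂ) (w : Fin m → ℂ) :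
    MvPolynomial.eval (Fin.cons a w) P
      = MvPolynomial.eval w (Polynomial.eval (MvPolynomial.C a)
          (MvPolynomial.finSuccEquiv ℂ m P)) := by
  rw [MvPolynomial.eval_polynomial_eval_finSuccEquiv]
  have h : (fun i => Fin.cases ((MvPolynomial.eval w) (MvPolynomial.C a)) w i)
      = Fin.cons a w := by
    funext i
    cases i using Fin.cases with
    | zero => simp
    | succ j => simp
  rw [h]

private lemma comp_cons {n m : ℕ} (t : Fin n → ℂ) (i : Fin n) (f : Fin m → Fin n) :
    t ∘ Fin.cons i f = Fin.cons (t i) (t ∘ f) := by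
  funext j
  cases j using Fin.cases with
  | zero => simp
  | succ k => simp

/-! ### The key multivariate induction -/

private lemma keyB {n : ℕ} (t : Fin n → ℂ) (ht : Function.Injective t) :
    ∀ (m : ℕ) (P : MvPolynomial (Fin m) ℂ) (c : ℂ),
      iterResInf m (fun z => MvPolynomial.eval z P / (c * ∏ j, ∏ i, (t i - z j))) =
        ∑ f : Fin m → Fin n, MvPolynomial.eval (t ∘ f) P /
          (c * ∏ j, ∏ k ∈ Finset.univ.erase (f j), (t k - t (f j))) := by
  intro m
  induction m with
  | zero =>
    intro P c
    rw [iterResInf, Fintype.sum_unique,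
      Subsingleton.elim (fun i : Fin 0 => i.elim0 : Fin 0 → ℂ)
        (t ∘ (default : Fin 0 → Fin n))]
    simp
  | succ m ih =>
    intro P c
    set E : (Fin m → Fin n) → ℂ :=
      fun f => ∏ j, ∏ k ∈ Finset.univ.erase (f j), (t k - t (f j)) with hE
    set BigQ : Polynomial ℂ := ∑ f : Fin m → Fin n,
      Polynomial.C ((c * E f)⁻¹) *
        (MvPolynomial.finSuccEquiv ℂ m P).map (MvPolynomial.eval (t ∘ f)) with hBigQ
    have hstep : (fun z₀ : ℂ => iterResInf m fun w =>
        MvPolynomial.eval (Fin.cons z₀ w) P /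
          (c * ∏ j, ∏ i, (t i - (Fin.cons z₀ w : Fin (m+1) → ℂ) j)))
        = fun z₀ => Polynomial.eval z₀ BigQ / ∏ i, (t i - z₀) := by
      funext z₀
      have h1 : (fun w : Fin m → ℂ => MvPolynomial.eval (Fin.cons z₀ w) P /
          (c * ∏ j, ∏ i, (t i - (Fin.cons z₀ w : Fin (m+1) → ℂ) j)))
          = fun w => MvPolynomial.eval w
              (Polynomial.eval (MvPolynomial.C z₀) (MvPolynomial.finSuccEquiv ℂ m P)) /
            ((c * ∏ i, (t i - z₀)) * ∏ j, ∏ i, (t i - w j)) := by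
        funext w
        rw [evalCons]
        congr 1
        rw [Fin.prod_univ_succ]
        simp only [Fin.cons_zero, Fin.cons_succ]
        ring
      rw [h1, ih _ (c * ∏ i, (t i - z₀))]
      rw [hBigQ, Polynomial.eval_finset_sum, Finset.sum_div]
      refine Finset.sum_congr rfl fun f _ => ?_
      rw [Polynomial.eval_mul, Polynomial.eval_C]
      have h2 : MvPolynomial.eval (t ∘ f)
          (Polynomial.eval (MvPolynomial.C z₀) (MvPolynomial.finSuccEquiv ℂ m P))
          = Polynomial.eval z₀
              ((MvPolynomial.finSuccEquiv ℂ m P).map (MvPolynomial.eval (t ∘ f))) := by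
        rw [← evalCons, MvPolynomial.eval_eq_eval_mv_eval']
      rw [h2]
      have h3 : (c * ∏ i, (t i - z₀)) * E f = (c * E f) * ∏ i, (t i - z₀) := by ring
      rw [h3, ← div_div, div_eq_mul_inv _ (c * E f),
        mul_comm (Polynomial.eval z₀ ((MvPolynomial.finSuccEquiv ℂ m P).map
          (MvPolynomial.eval (t ∘ f)))) ((c * E f)⁻¹)]
    rw [iterResInf]
    have hbeta : (fun z : ℂ => iterResInf m fun w =>
        (fun z' : Fin (m+1) → ℂ => MvPolynomial.eval z' P / (c * ∏ j, ∏ i, (t i - z' j)))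
          (Fin.cons z w))
        = fun z₀ => Polynomial.eval z₀ BigQ / ∏ i, (t i - z₀) := hstep
    rw [hbeta, resInf_rational t ht BigQ]
    have hRHS : (∑ g : Fin (m + 1) → Fin n, MvPolynomial.eval (t ∘ g) P /
        (c * ∏ j, ∏ k ∈ Finset.univ.erase (g j), (t k - t (g j))))
        = ∑ i : Fin n, ∑ f : Fin m → Fin n,
            MvPolynomial.eval (t ∘ Fin.cons i f) P /
              (c * ∏ j, ∏ k ∈ Finset.univ.erase ((Fin.cons i f : Fin (m+1) → Fin n) j),
                (t k - t ((Fin.cons i f : Fin (m+1) → Fin n) j))) := by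
      rw [← Equiv.sum_comp (Fin.consEquiv fun _ : Fin (m + 1) => Fin n)
        (fun g : Fin (m + 1) → Fin n => MvPolynomial.eval (t ∘ g) P /
          (c * ∏ j, ∏ k ∈ Finset.univ.erase (g j), (t k - t (g j)))),
        Fintype.sum_prod_type]
      rfl
    rw [hRHS]
    refine Finset.sum_congr rfl fun i _ => ?_
    have hBig : Polynomial.eval (t i) BigQ
        = ∑ f : Fin m → Fin n, (c * E f)⁻¹ * MvPolynomial.eval (t ∘ Fin.cons i f) P := by
      rw [hBigQ, Polynomial.eval_finset_sum]
      refine Finset.sum_congr rfl fun f _ => ?_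
      rw [Polynomial.eval_mul, Polynomial.eval_C]
      congr 1
      rw [← MvPolynomial.eval_eq_eval_mv_eval', ← comp_cons]
    rw [hBig, Finset.sum_div]
    refine Finset.sum_congr rfl fun f _ => ?_
    have h4 : (∏ j, ∏ k ∈ Finset.univ.erase ((Fin.cons i f : Fin (m+1) → Fin n) j),
        (t k - t ((Fin.cons i f : Fin (m+1) → Fin n) j)))
        = (∏ k ∈ Finset.univ.erase i, (t k - t i)) * E f := by
      rw [Fin.prod_univ_succ]
      simp only [Fin.cons_zero, Fin.cons_succ]
      rfl
    rw [h4]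
    have h5 : c * ((∏ k ∈ Finset.univ.erase i, (t k - t i)) * E f)
        = (c * E f) * ∏ k ∈ Finset.univ.erase i, (t k - t i) := by ring
    rw [h5, ← div_div, div_eq_mul_inv _ (c * E f),
      mul_comm (MvPolynomial.eval (t ∘ Fin.cons i f) P) ((c * E f)⁻¹)]

/-! ### Products over `offDiag` -/

private lemma prod_offDiag_eq {n : ℕ} (g : Fin n → Fin n → ℂ) :
    (∏ p ∈ (Finset.univ : Finset (Fin n)).offDiag, g p.1 p.2)
      = ∏ j, ∏ k ∈ Finset.univ.erase j, g k j := by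
  rw [Finset.prod_sigma']
  refine Finset.prod_nbij' (fun p => ⟨p.2, p.1⟩) (fun q => (q.2, q.1)) ?_ ?_ ?_ ?_ ?_
  · intro p hp
    simp only [Finset.mem_offDiag] at hp
    simp only [Finset.mem_sigma, Finset.mem_univ, Finset.mem_erase, true_and]
    exact ⟨hp.2.2, trivial⟩
  · intro q hq
    simp only [Finset.mem_sigma, Finset.mem_univ, Finset.mem_erase, true_and] at hq
    simp only [Finset.mem_offDiag, Finset.mem_univ, true_and]
    exact hq.1
  · intro p _; rfl
  · intro q _; rfl
  · intro p _; rfl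

private lemma prod_offDiag_perm {n : ℕ} (σ : Equiv.Perm (Fin n)) (g : Fin n → Fin n → ℂ) :
    (∏ p ∈ (Finset.univ : Finset (Fin n)).offDiag, g (σ p.1) (σ p.2))
      = ∏ p ∈ (Finset.univ : Finset (Fin n)).offDiag, g p.1 p.2 := by
  refine Finset.prod_nbij' (fun p => (σ p.1, σ p.2)) (fun p => (σ⁻¹ p.1, σ⁻¹ p.2))
    ?_ ?_ ?_ ?_ ?_
  · intro p hp
    simp only [Finset.mem_offDiag, Finset.mem_univ, true_and] at hp ⊢
    exact fun h => hp (σ.injective h)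
  · intro p hp
    simp only [Finset.mem_offDiag, Finset.mem_univ, true_and] at hp ⊢
    exact fun h => hp (σ⁻¹.injective h)
  · intro p _; simp
  · intro p _; simp
  · intro p _; rfl

/-! ### Main theorem -/

/-- The `m = n` case of the Grassmannian residue formula: `Grass_n(ℂⁿ)` is a point, so the
iterated residue evaluates `V` at `(t₁, …, tₙ)`. -/
theorem grassmannian_residue_formula_point (n : ℕ) (hn : 1 ≤ n)
    (V : MvPolynomial (Fin n) ℂ) (hV : V.IsSymmetric)
    (t : Fin n → ℂ) (ht : Function.Injective t) :
    (1 / (n.factorial : ℂ)) *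
      iterResInf n (fun z =>
        (MvPolynomial.eval z V * ∏ p ∈ (Finset.univ : Finset (Fin n)).offDiag, (z p.1 - z p.2)) /
          ∏ i : Fin n, ∏ j : Fin n, (t i - z j)) =
    MvPolynomial.eval t V := by
  classical
  set P₀ : MvPolynomial (Fin n) ℂ :=
    V * ∏ p ∈ (Finset.univ : Finset (Fin n)).offDiag,
      (MvPolynomial.X p.1 - MvPolynomial.X p.2) with hP₀
  have hevalP₀ : ∀ g : Fin n → ℂ,
      MvPolynomial.eval g P₀
        = MvPolynomial.eval g V * ∏ p ∈ (Finset.univ : Finset (Fin n)).offDiag,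
            (g p.1 - g p.2) := by
    intro g
    rw [hP₀, map_mul, map_prod]
    simp
  have hshape : (fun z : Fin n → ℂ =>
      (MvPolynomial.eval z V * ∏ p ∈ (Finset.univ : Finset (Fin n)).offDiag, (z p.1 - z p.2)) /
        ∏ i : Fin n, ∏ j : Fin n, (t i - z j))
      = fun z => MvPolynomial.eval z P₀ / ((1 : ℂ) * ∏ j, ∏ i, (t i - z j)) := by
    funext z
    rw [hevalP₀, one_mul]
    congr 1
    exact Finset.prod_comm
  rw [hshape, keyB t ht n P₀ 1]
  set A : ℂ := ∏ p ∈ (Finset.univ : Finset (Fin n)).offDiag, (t p.1 - t p.2) with hAdef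
  have hA : A ≠ 0 := by
    rw [hAdef]
    refine Finset.prod_ne_zero_iff.mpr fun p hp => ?_
    rw [Finset.mem_offDiag] at hp
    exact sub_ne_zero.mpr fun h => hp.2.2 (ht h)
  set term : (Fin n → Fin n) → ℂ := fun f => MvPolynomial.eval (t ∘ f) P₀ /
    ((1 : ℂ) * ∏ j, ∏ k ∈ Finset.univ.erase (f j), (t k - t (f j))) with hterm
  have hterm0 : ∀ f : Fin n → Fin n, ¬Function.Injective f → term f = 0 := by
    intro f hf
    obtain ⟨a, b, hab, hne⟩ := Function.not_injective_iff.mp hf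
    have hmem : (a, b) ∈ (Finset.univ : Finset (Fin n)).offDiag := by
      simp [Finset.mem_offDiag, hne]
    have hzero : (∏ p ∈ (Finset.univ : Finset (Fin n)).offDiag,
        ((t ∘ f) p.1 - (t ∘ f) p.2)) = 0 :=
      Finset.prod_eq_zero hmem (by simp [Function.comp, hab])
    rw [hterm]
    simp only
    rw [hevalP₀, hzero, mul_zero, zero_div]
  have htermσ : ∀ σ : Equiv.Perm (Fin n), term ⇑σ = MvPolynomial.eval t V := by
    intro σ
    have h1 : MvPolynomial.eval (t ∘ ⇑σ) V = MvPolynomial.eval t V := by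
      conv_rhs => rw [← hV σ]
      rw [MvPolynomial.eval_rename]
    have h2 : (∏ p ∈ (Finset.univ : Finset (Fin n)).offDiag,
        ((t ∘ ⇑σ) p.1 - (t ∘ ⇑σ) p.2)) = A := by
      rw [hAdef]
      exact prod_offDiag_perm σ (fun a b => t a - t b)
    have h3 : (∏ j, ∏ k ∈ Finset.univ.erase (σ j), (t k - t (σ j))) = A := by
      rw [Equiv.prod_comp σ (fun j => ∏ k ∈ Finset.univ.erase j, (t k - t j)), hAdef,
        prod_offDiag_eq (fun a b => t a - t b)]
    rw [hterm]
    simp only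
    rw [hevalP₀, h1, h2, h3, one_mul, mul_div_assoc, div_self hA, mul_one]
  have hS : (∑ f : Fin n → Fin n, term f) = (n.factorial : ℂ) * MvPolynomial.eval t V := by
    set S : Finset (Fin n → Fin n) :=
      Finset.image (fun σ : Equiv.Perm (Fin n) => ⇑σ) Finset.univ with hSdef
    have hsub : (∑ f ∈ S, term f) = ∑ f : Fin n → Fin n, term f := by
      refine Finset.sum_subset (Finset.subset_univ S) fun f _ hf => ?_
      refine hterm0 f fun hinj => hf ?_
      have hbij : Function.Bijective f := Finite.injective_iff_bijective.mp hinj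
      rw [hSdef]
      exact Finset.mem_image.mpr ⟨Equiv.ofBijective f hbij, Finset.mem_univ _, rfl⟩
    rw [← hsub, hSdef, Finset.sum_image (fun σ _ τ _ h => Equiv.coe_fn_injective h)]
    rw [Finset.sum_congr rfl fun σ _ => htermσ σ, Finset.sum_const, Finset.card_univ,
      Fintype.card_perm, Fintype.card_fin, nsmul_eq_mul]
  rw [hS]
  have hfact : (n.factorial : ℂ) ≠ 0 := Nat.cast_ne_zero.mpr (Nat.factorial_ne_zero n)
  field_simp
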